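/- For the one-dimensional Gaussian scale model with generator G_θ(u) = e^θ u, base measure U = N(0,1), and Gaussian kernel k(x,y) = φ(x; y, l²), writing s = e^{2θ*}, the MMD metric tensor at θ* in dimension d equals g(θ*) = A_1 + A_2 + A_3 where A_1 = d² (2π)^{-d/2}(l²+2s)^{-d/2}, A_2 = -(2d²/(l²+s)) (2π)^{-d/2}(l²+2s)^{-d/2}[l² + s²/(l²+2s)], and A_3 = (2π)^{-d/2}(l²+2s)^{-d/2}[d²l²/(l²+2s) + (d²+2d) s²/(l²+2s)²]. -/

import Mathlib

open Finset MeasureTheory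

/-- `d`-dimensional isotropic Gaussian density with mean `m` and variance `v`. -/
noncomputable def gaussPdfD (d : ℕ) (x m : Fin d → ℝ) (v : ℝ) : ℝ :=
  (2 * Real.pi * v) ^ (-(d : ℝ) / 2)
    * Real.exp (-(∑ i, (x i - m i) ^ 2) / (2 * v))

noncomputable def g1 (v m t : ℝ) : ℝ :=
  (2 * Real.pi * v) ^ (-(1:ℝ) / 2) * Real.exp (-((t - m) ^ 2) / (2 * v))

-- integrability of t^k * exp(-b t^2)
lemma integrable_pow_gauss {b : ℝ} (hb : 0 < b) (k : ℕ) :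
    Integrable (fun t : ℝ => t ^ k * Real.exp (-b * t ^ 2)) := by
  have := integrable_rpow_mul_exp_neg_mul_sq hb (s := (k : ℝ)) (by exact lt_of_lt_of_le (by norm_num) (Nat.cast_nonneg k))
  simpa [Real.rpow_natCast] using this

-- even moment raw: ∫ x^(2n) e^{-bx²}
lemma integral_even_pow_gauss {b : ℝ} (hb : 0 < b) (n : ℕ) :
    ∫ t : ℝ, t ^ (2 * n) * Real.exp (-b * t ^ 2)
      = b ^ (-(2 * (n:ℝ) + 1) / 2) * Real.Gamma ((2 * (n:ℝ) + 1) / 2) := by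
  have h1 : ∫ t : ℝ, t ^ (2 * n) * Real.exp (-b * t ^ 2)
      = 2 * ∫ t in Set.Ioi (0:ℝ), t ^ (2 * n) * Real.exp (-b * t ^ 2) := by
    rw [← integral_comp_abs (f := fun t => t ^ (2 * n) * Real.exp (-b * t ^ 2))]
    congr 1 with t
    rw [pow_mul, pow_mul, sq_abs]
  have h2 : ∫ t in Set.Ioi (0:ℝ), t ^ (2 * n) * Real.exp (-b * t ^ 2)
      = ∫ t in Set.Ioi (0:ℝ), t ^ ((2 * n : ℕ) : ℝ) * Real.exp (-b * t ^ (2:ℝ)) := by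
    refine setIntegral_congr_fun measurableSet_Ioi (fun t ht => ?_)
    rw [Real.rpow_natCast, Real.rpow_two]
  rw [h1, h2, integral_rpow_mul_exp_neg_mul_rpow (p := 2) (q := ((2*n : ℕ) : ℝ)) (by norm_num) (lt_of_lt_of_le (by norm_num) (Nat.cast_nonneg _)) hb]
  push_cast
  ring_nf

lemma Gamma_three_halves : Real.Gamma (3/2) = Real.sqrt Real.pi / 2 := by
  rw [show (3/2:ℝ) = 1/2 + 1 by norm_num, Real.Gamma_add_one (by norm_num),
    Real.Gamma_one_half_eq]; ring

lemma Gamma_five_halves : Real.Gamma (5/2) = 3 * Real.sqrt Real.pi / 4 := by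
  rw [show (5/2:ℝ) = 3/2 + 1 by norm_num, Real.Gamma_add_one (by norm_num),
    Gamma_three_halves]; ring

lemma g1_arg {v : ℝ} (m t : ℝ) : g1 v m t
    = (2 * Real.pi * v) ^ (-(1:ℝ)/2) * Real.exp (-(2*v)⁻¹ * (t - m) ^ 2) := by
  simp only [g1]; congr 1; ring

lemma rpow_algebra {v : ℝ} (hv : 0 < v) (r : ℝ) :
    (2*Real.pi*v) ^ (-(1:ℝ)/2) * ((2*v)⁻¹) ^ (-(2*r+1)/2)
      = Real.pi ^ (-(1:ℝ)/2) * (2*v) ^ r := by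
  rw [show 2*Real.pi*v = Real.pi*(2*v) by ring,
    Real.mul_rpow Real.pi_pos.le (by positivity),
    Real.inv_rpow (by positivity), ← Real.rpow_neg (by positivity),
    mul_assoc, ← Real.rpow_add (by positivity)]
  congr 1; ring

lemma pi_inv_sqrt : Real.pi ^ (-(1:ℝ)/2) * Real.sqrt Real.pi = 1 := by
  rw [Real.sqrt_eq_rpow, ← Real.rpow_add Real.pi_pos]
  norm_num

lemma integral_pow_g1_zero {v : ℝ} (hv : 0 < v) (n : ℕ) :
    ∫ t : ℝ, t ^ (2*n) * g1 v 0 t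
      = Real.pi ^ (-(1:ℝ)/2) * (2*v) ^ (n:ℝ) * Real.Gamma ((2*(n:ℝ)+1)/2) := by
  have hb : (0:ℝ) < (2*v)⁻¹ := by positivity
  have : (fun t : ℝ => t ^ (2*n) * g1 v 0 t)
      = fun t => (2*Real.pi*v) ^ (-(1:ℝ)/2) * (t ^ (2*n) * Real.exp (-(2*v)⁻¹ * t^2)) := by
    funext t; rw [g1_arg]; ring_nf
  rw [this, integral_const_mul, integral_even_pow_gauss hb n, ← mul_assoc,
    rpow_algebra hv (n : ℝ)]

lemma integral_g1_zero {v : ℝ} (hv : 0 < v) : ∫ t : ℝ, g1 v 0 t = 1 := by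
  have h := integral_pow_g1_zero hv 0
  simp only [Nat.cast_zero, mul_zero, pow_zero, one_mul, Real.rpow_zero, mul_one] at h
  rw [h, show ((0:ℝ)+1)/2 = 1/2 by norm_num, Real.Gamma_one_half_eq, pi_inv_sqrt]

lemma integral_sq_g1_zero {v : ℝ} (hv : 0 < v) : ∫ t : ℝ, t^2 * g1 v 0 t = v := by
  have := integral_pow_g1_zero hv 1
  rw [show 2*1 = 2 by norm_num] at this
  rw [show ((1:ℕ):ℝ) = (1:ℝ) by norm_num] at this
  rw [this, show (2*(1:ℝ)+1)/2 = 3/2 by norm_num, Gamma_three_halves, Real.rpow_one]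
  rw [show Real.pi ^ (-(1:ℝ)/2) * (2*v) * (Real.sqrt Real.pi / 2)
      = (Real.pi ^ (-(1:ℝ)/2) * Real.sqrt Real.pi) * v by ring, pi_inv_sqrt, one_mul]

lemma integral_quart_g1_zero {v : ℝ} (hv : 0 < v) : ∫ t : ℝ, t^4 * g1 v 0 t = 3*v^2 := by
  have := integral_pow_g1_zero hv 2
  rw [show 2*2 = 4 by norm_num] at this
  rw [show ((2:ℕ):ℝ) = (2:ℝ) by norm_num] at this
  rw [this, show (2*(2:ℝ)+1)/2 = 5/2 by norm_num, Gamma_five_halves,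
    show (2*v) ^ (2:ℝ) = (2*v)^(2:ℕ) by rw [← Real.rpow_natCast (2*v) 2]; norm_num]
  rw [show Real.pi ^ (-(1:ℝ)/2) * (2*v)^(2:ℕ) * (3 * Real.sqrt Real.pi / 4)
      = (Real.pi ^ (-(1:ℝ)/2) * Real.sqrt Real.pi) * (3 * v^2) by ring, pi_inv_sqrt, one_mul]

lemma integral_odd_g1_zero {v : ℝ} (hv : 0 < v) (k : ℕ) :
    ∫ t : ℝ, t^(2*k+1) * g1 v 0 t = 0 := by
  have h := MeasureTheory.integral_neg_eq_self (fun t : ℝ => t^(2*k+1) * g1 v 0 t) volume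
  have h2 : ∀ t : ℝ, (-t)^(2*k+1) * g1 v 0 (-t) = -(t^(2*k+1) * g1 v 0 t) := by
    intro t
    have : g1 v 0 (-t) = g1 v 0 t := by simp only [g1]; ring_nf
    rw [this, Odd.neg_pow ⟨k, by ring⟩]; ring
  simp only [h2, integral_neg] at h
  linarith

lemma integrable_pow_g1_zero {v : ℝ} (hv : 0 < v) (k : ℕ) :
    Integrable (fun t : ℝ => t ^ k * g1 v 0 t) := by
  have hb : (0:ℝ) < (2*v)⁻¹ := by positivity
  have : (fun t : ℝ => t ^ k * g1 v 0 t)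
      = fun t => (2*Real.pi*v) ^ (-(1:ℝ)/2) * (t ^ k * Real.exp (-(2*v)⁻¹ * t^2)) := by
    funext t; rw [g1_arg]; ring_nf
  rw [this]
  exact (integrable_pow_gauss hb k).const_mul _

lemma g1_shift {v : ℝ} (m t : ℝ) : g1 v 0 (t - m) = g1 v m t := by
  simp only [g1, sub_zero]

lemma integrable_pow_g1 {v : ℝ} (hv : 0 < v) (m : ℝ) (k : ℕ) :
    Integrable (fun t : ℝ => t ^ k * g1 v m t) := by
  have base : Integrable (fun u : ℝ => (u + m) ^ k * g1 v 0 u) := by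
    have : (fun u : ℝ => (u + m) ^ k * g1 v 0 u)
        = fun u => ∑ j ∈ Finset.range (k+1),
            (m ^ (k - j) * (k.choose j : ℝ)) * (u ^ j * g1 v 0 u) := by
      funext u
      rw [add_pow, Finset.sum_mul]
      exact Finset.sum_congr rfl fun j _ => by ring
    rw [this]
    exact integrable_finset_sum _ fun j _ => ((integrable_pow_g1_zero hv j).const_mul _)
  have := base.comp_sub_right m
  simpa only [g1_shift, sub_add_cancel] using this

lemma integral_pow_g1_shift {v : ℝ} (m : ℝ) (k : ℕ) :
    ∫ t : ℝ, t ^ k * g1 v m t = ∫ u : ℝ, (u + m) ^ k * g1 v 0 u := by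
  rw [← integral_sub_right_eq_self (fun u : ℝ => (u + m) ^ k * g1 v 0 u) m]
  congr 1 with t
  rw [g1_shift, sub_add_cancel]

lemma integral_g1 {v : ℝ} (hv : 0 < v) (m : ℝ) : ∫ t : ℝ, g1 v m t = 1 := by
  have h := integral_pow_g1_shift (v := v) m 0
  simp only [pow_zero, one_mul] at h
  rw [h, integral_g1_zero hv]

lemma integral_sq_g1 {v : ℝ} (hv : 0 < v) (m : ℝ) :
    ∫ t : ℝ, t ^ 2 * g1 v m t = v + m ^ 2 := by
  rw [integral_pow_g1_shift m 2]
  have expand : (fun u : ℝ => (u + m) ^ 2 * g1 v 0 u)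
      = fun u => (u^2 * g1 v 0 u + (2*m) * (u^1 * g1 v 0 u)) + m^2 * (u^0 * g1 v 0 u) := by
    funext u; ring
  have i2 : Integrable (fun u : ℝ => u^2 * g1 v 0 u) := integrable_pow_g1_zero hv 2
  have i1 : Integrable (fun u : ℝ => (2*m) * (u^1 * g1 v 0 u)) :=
    (integrable_pow_g1_zero hv 1).const_mul _
  have i0 : Integrable (fun u : ℝ => m^2 * (u^0 * g1 v 0 u)) :=
    (integrable_pow_g1_zero hv 0).const_mul _
  have i21 : Integrable (fun u : ℝ => u^2 * g1 v 0 u + (2*m) * (u^1 * g1 v 0 u)) := i2.add i1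
  rw [expand, integral_add i21 i0, integral_add i2 i1, integral_const_mul,
    integral_const_mul, integral_sq_g1_zero hv]
  have hodd : ∫ u : ℝ, u^1 * g1 v 0 u = 0 := by
    simpa using integral_odd_g1_zero hv 0
  have h0 : ∫ u : ℝ, u^0 * g1 v 0 u = 1 := by
    simpa using integral_g1_zero hv
  rw [hodd, h0]; ring

lemma integrable_poly2_g1 {v : ℝ} (hv : 0 < v) (m c0 c2 : ℝ) :
    Integrable (fun t : ℝ => (c0 + c2 * t^2) * g1 v m t) := by
  have : (fun t : ℝ => (c0 + c2 * t^2) * g1 v m t)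
      = fun t => c0 * (t^0 * g1 v m t) + c2 * (t^2 * g1 v m t) := by
    funext t; ring
  rw [this]
  exact ((integrable_pow_g1 hv m 0).const_mul _).add ((integrable_pow_g1 hv m 2).const_mul _)

lemma integral_poly2_g1 {v : ℝ} (hv : 0 < v) (m c0 c2 : ℝ) :
    ∫ t : ℝ, (c0 + c2 * t^2) * g1 v m t = c0 + c2 * (v + m^2) := by
  have e : (fun t : ℝ => (c0 + c2 * t^2) * g1 v m t)
      = fun t => c0 * (t^0 * g1 v m t) + c2 * (t^2 * g1 v m t) := by
    funext t; ring
  have i0 : Integrable (fun t : ℝ => c0 * (t^0 * g1 v m t)) :=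
    (integrable_pow_g1 hv m 0).const_mul _
  have i2 : Integrable (fun t : ℝ => c2 * (t^2 * g1 v m t)) :=
    (integrable_pow_g1 hv m 2).const_mul _
  rw [e, integral_add i0 i2, integral_const_mul, integral_const_mul, integral_sq_g1 hv]
  have h0 : ∫ t : ℝ, t^0 * g1 v m t = 1 := by
    simpa using integral_g1 hv m
  rw [h0]; ring

lemma integrable_poly4_g1 {v : ℝ} (hv : 0 < v) (c0 c2 c4 : ℝ) :
    Integrable (fun t : ℝ => (c0 + c2 * t^2 + c4 * t^4) * g1 v 0 t) := by
  have : (fun t : ℝ => (c0 + c2 * t^2 + c4 * t^4) * g1 v 0 t)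
      = fun t => (c0 + c2 * t^2) * g1 v 0 t + c4 * (t^4 * g1 v 0 t) := by
    funext t; ring
  rw [this]
  exact (integrable_poly2_g1 hv 0 c0 c2).add ((integrable_pow_g1_zero hv 4).const_mul _)

lemma integral_poly4_g1 {v : ℝ} (hv : 0 < v) (c0 c2 c4 : ℝ) :
    ∫ t : ℝ, (c0 + c2 * t^2 + c4 * t^4) * g1 v 0 t = c0 + c2 * v + 3 * c4 * v^2 := by
  have e : (fun t : ℝ => (c0 + c2 * t^2 + c4 * t^4) * g1 v 0 t)
      = fun t => (c0 + c2 * t^2) * g1 v 0 t + c4 * (t^4 * g1 v 0 t) := by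
    funext t; ring
  have ia : Integrable (fun t : ℝ => (c0 + c2 * t^2) * g1 v 0 t) :=
    integrable_poly2_g1 hv 0 c0 c2
  have ib : Integrable (fun t : ℝ => c4 * (t^4 * g1 v 0 t)) :=
    (integrable_pow_g1_zero hv 4).const_mul _
  rw [e, integral_add ia ib, integral_const_mul, integral_poly2_g1 hv 0,
    integral_quart_g1_zero hv]
  ring

/-- Product of two Gaussian densities. -/
lemma g1_mul_g1 {v₁ v₂ : ℝ} (h1 : 0 < v₁) (h2 : 0 < v₂) (m a : ℝ) :
    g1 v₁ m a * g1 v₂ 0 a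
      = g1 (v₁ + v₂) 0 m * g1 (v₁ * v₂ / (v₁ + v₂)) (v₂ * m / (v₁ + v₂)) a := by
  have h12 : 0 < v₁ + v₂ := by linarith
  simp only [g1]
  rw [mul_mul_mul_comm, ← Real.exp_add, mul_mul_mul_comm, ← Real.exp_add]
  congr 1
  · rw [← Real.mul_rpow (by positivity) (by positivity),
      ← Real.mul_rpow (by positivity) (by positivity)]
    congr 1
    field_simp
  · congr 1
    field_simp
    ring

lemma gaussPdfD_eq_prod (d : ℕ) (x m : Fin d → ℝ) {v : ℝ} (hv : 0 < v) :
    gaussPdfD d x m v = ∏ i, g1 v (m i) (x i) := by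
  simp only [gaussPdfD, g1]
  rw [Finset.prod_mul_distrib, Finset.prod_const, ← Real.exp_sum]
  congr 1
  · rw [Finset.card_univ, ← Real.rpow_natCast ((2*Real.pi*v) ^ (-(1:ℝ)/2)) (Fintype.card (Fin d)),
      ← Real.rpow_mul (by positivity), Fintype.card_fin]
    congr 1; ring
  · rw [← Finset.sum_div, ← Finset.sum_neg_distrib]

lemma prod_ite_single {d : ℕ} (i : Fin d) (A B : ℝ) :
    ∏ k : Fin d, (if k = i then A else B) = A * B ^ (d - 1) := by
  rw [← Finset.mul_prod_erase Finset.univ _ (Finset.mem_univ i), if_pos rfl]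
  congr 1
  rw [Finset.prod_congr rfl (fun k hk => if_neg (Finset.ne_of_mem_erase hk)),
    Finset.prod_const, Finset.card_erase_of_mem (Finset.mem_univ i), Finset.card_univ,
    Fintype.card_fin]

lemma prod_ite_pair {d : ℕ} {i j : Fin d} (hij : i ≠ j) (A B C : ℝ) :
    ∏ k : Fin d, (if k = i then A else if k = j then B else C)
      = A * B * C ^ (d - 2) := by
  rw [← Finset.mul_prod_erase Finset.univ _ (Finset.mem_univ i), if_pos rfl]
  have hj : j ∈ Finset.univ.erase i := Finset.mem_erase.2 ⟨hij.symm, Finset.mem_univ j⟩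
  rw [← Finset.mul_prod_erase _ _ hj, if_neg hij.symm, if_pos rfl, ← mul_assoc]
  congr 1
  have hcongr : ∏ k ∈ (Finset.univ.erase i).erase j,
      (if k = i then A else if k = j then B else C)
      = ∏ _k ∈ (Finset.univ.erase i).erase j, C := by
    refine Finset.prod_congr rfl fun k hk => ?_
    have hk1 := Finset.ne_of_mem_erase hk
    have hk2 := Finset.ne_of_mem_erase (Finset.mem_of_mem_erase hk)
    rw [if_neg hk2, if_neg hk1]
  rw [hcongr, Finset.prod_const, Finset.card_erase_of_mem hj,
    Finset.card_erase_of_mem (Finset.mem_univ i), Finset.card_univ, Fintype.card_fin,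
    Nat.sub_sub]

noncomputable def vA (l s : ℝ) : ℝ := l^2*s/(l^2+s)
noncomputable def mcA (l s : ℝ) : ℝ := s/(l^2+s)
noncomputable def wA (l s : ℝ) : ℝ := s*(l^2+s)/(l^2+2*s)
noncomputable def ZA (l s : ℝ) : ℝ := (2*Real.pi*(l^2+2*s)) ^ (-(1:ℝ)/2)
noncomputable def g2A (l s a b : ℝ) : ℝ := g1 (l^2) b a * (g1 s 0 a * g1 s 0 b)
noncomputable def TA (l s c c' : ℝ) : ℝ :=
  ZA l s * ((1 + c'*vA l s) + (c*(1+c'*vA l s) + c'*(mcA l s)^2)*wA l s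
    + 3*(c*c'*(mcA l s)^2)*(wA l s)^2)

section keys
variable {l s : ℝ} (hl : 0 < l) (hs : 0 < s)

include hl hs in
lemma vA_pos : 0 < vA l s := by unfold vA; positivity

include hl hs in
lemma wA_pos : 0 < wA l s := by unfold wA; positivity

include hl hs in
lemma key_g2 (a b : ℝ) :
    g2A l s a b = (ZA l s * g1 (wA l s) 0 a) * g1 (vA l s) (mcA l s * a) b := by
  have hl2 : (0:ℝ) < l^2 := by positivity
  have hls : (0:ℝ) < l^2 + s := by positivity
  have hsym : g1 (l^2) b a = g1 (l^2) a b := by simp only [g1]; ring_nf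
  have h1 : g1 (l^2) a b * g1 s 0 b
      = g1 (l^2 + s) 0 a * g1 (vA l s) (mcA l s * a) b := by
    rw [g1_mul_g1 hl2 hs a b,
      show s*a/(l^2+s) = mcA l s * a by unfold mcA; ring]
    rfl
  have h2 : g1 (l^2 + s) 0 a * g1 s 0 a = ZA l s * g1 (wA l s) 0 a := by
    rw [g1_mul_g1 hls hs 0 a,
      show (l^2+s)*s/(l^2+s+s) = wA l s by unfold wA; field_simp; ring,
      show s*0/(l^2+s+s) = (0:ℝ) by ring]
    congr 1
    simp only [g1, ZA]
    rw [show l^2 + s + s = l^2 + 2*s by ring]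
    norm_num
  calc g2A l s a b = (g1 (l^2) a b * g1 s 0 b) * g1 s 0 a := by
        unfold g2A; rw [hsym]; ring
    _ = (g1 (l^2 + s) 0 a * g1 s 0 a) * g1 (vA l s) (mcA l s * a) b := by rw [h1]; ring
    _ = _ := by rw [h2]

include hl hs in
lemma integrable_inner (c' a : ℝ) :
    Integrable (fun b => (1 + c'*b^2) * g2A l s a b) := by
  have : (fun b => (1 + c'*b^2) * g2A l s a b)
      = fun b => (ZA l s * g1 (wA l s) 0 a)
          * ((1 + c'*b^2) * g1 (vA l s) (mcA l s * a) b) := by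
    funext b; rw [key_g2 hl hs a b]; ring
  rw [this]
  exact (integrable_poly2_g1 (vA_pos hl hs) _ _ _).const_mul _

include hl hs in
lemma key_inner (c' a : ℝ) :
    ∫ b : ℝ, (1 + c'*b^2) * g2A l s a b
      = (ZA l s * g1 (wA l s) 0 a) * (1 + c'*(vA l s + (mcA l s * a)^2)) := by
  have : (fun b => (1 + c'*b^2) * g2A l s a b)
      = fun b => (ZA l s * g1 (wA l s) 0 a)
          * ((1 + c'*b^2) * g1 (vA l s) (mcA l s * a) b) := by
    funext b; rw [key_g2 hl hs a b]; ring
  rw [this, integral_const_mul, integral_poly2_g1 (vA_pos hl hs)]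

include hl hs in
lemma integrable_outer (c c' : ℝ) :
    Integrable (fun a => (1 + c*a^2)
      * ((ZA l s * g1 (wA l s) 0 a) * (1 + c'*(vA l s + (mcA l s * a)^2)))) := by
  have : (fun a => (1 + c*a^2)
      * ((ZA l s * g1 (wA l s) 0 a) * (1 + c'*(vA l s + (mcA l s * a)^2))))
      = fun a => ZA l s * (((1 + c'*vA l s) + (c*(1+c'*vA l s) + c'*(mcA l s)^2)*a^2
          + (c*c'*(mcA l s)^2)*a^4) * g1 (wA l s) 0 a) := by
    funext a; ring
  rw [this]
  exact (integrable_poly4_g1 (wA_pos hl hs) _ _ _).const_mul _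

include hl hs in
lemma key_outer (c c' : ℝ) :
    ∫ a : ℝ, (1 + c*a^2)
      * ((ZA l s * g1 (wA l s) 0 a) * (1 + c'*(vA l s + (mcA l s * a)^2)))
      = TA l s c c' := by
  have : (fun a => (1 + c*a^2)
      * ((ZA l s * g1 (wA l s) 0 a) * (1 + c'*(vA l s + (mcA l s * a)^2))))
      = fun a => ZA l s * (((1 + c'*vA l s) + (c*(1+c'*vA l s) + c'*(mcA l s)^2)*a^2
          + (c*c'*(mcA l s)^2)*a^4) * g1 (wA l s) 0 a) := by
    funext a; ring
  rw [this, integral_const_mul, integral_poly4_g1 (wA_pos hl hs)]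
  unfold TA
  ring

end keys

noncomputable def FX (s l : ℝ) (d : ℕ) (i j k : Fin d) (a b : ℝ) : ℝ :=
  (1 + (if k = i then -(1/s) else 0) * a^2)
    * ((1 + (if k = j then -(1/s) else 0) * b^2) * g2A l s a b)

noncomputable def hX (s l : ℝ) (d : ℕ) (i j k : Fin d) (a : ℝ) : ℝ :=
  (1 + (if k = i then -(1/s) else 0) * a^2)
    * ((ZA l s * g1 (wA l s) 0 a)
      * (1 + (if k = j then -(1/s) else 0) * (vA l s + (mcA l s * a)^2)))

section steps
variable {l s : ℝ} (hl : 0 < l) (hs : 0 < s) {d : ℕ}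

include hl hs in
lemma integrable_FX (i j k : Fin d) (a : ℝ) :
    Integrable (fun b => FX s l d i j k a b) := by
  unfold FX
  exact (integrable_inner hl hs _ a).const_mul _

include hl hs in
lemma integral_FX (i j k : Fin d) (a : ℝ) :
    ∫ b : ℝ, FX s l d i j k a b = hX s l d i j k a := by
  unfold FX hX
  rw [integral_const_mul, key_inner hl hs]

include hl hs in
lemma integrable_hX (i j k : Fin d) :
    Integrable (fun a => hX s l d i j k a) := by
  unfold hX
  exact integrable_outer hl hs _ _

include hl hs in
lemma integral_hX (i j k : Fin d) :
    ∫ a : ℝ, hX s l d i j k a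
      = TA l s (if k = i then -(1/s) else 0) (if k = j then -(1/s) else 0) := by
  unfold hX
  exact key_outer hl hs _ _

include hl hs in
lemma step1 (x y : Fin d → ℝ) :
    ((d : ℝ) - (∑ i, x i ^ 2) / s) * ((d : ℝ) - (∑ i, y i ^ 2) / s)
      * gaussPdfD d x y (l ^ 2) * gaussPdfD d x 0 s * gaussPdfD d y 0 s
    = ∑ i, ∑ j, ∏ k, FX s l d i j k (x k) (y k) := by
  have hl2 : (0:ℝ) < l^2 := by positivity
  have hsum : ∀ z : Fin d → ℝ,
      (d:ℝ) - (∑ i, z i ^ 2)/s = ∑ i, (1 + (-(1/s)) * (z i)^2) := by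
    intro z
    rw [Finset.sum_add_distrib, Finset.sum_const, Finset.card_univ, Fintype.card_fin,
      ← Finset.mul_sum, nsmul_eq_mul, mul_one]
    field_simp
    ring
  have hprod : gaussPdfD d x y (l ^ 2) * gaussPdfD d x 0 s * gaussPdfD d y 0 s
      = ∏ k, g2A l s (x k) (y k) := by
    rw [gaussPdfD_eq_prod d x y hl2, gaussPdfD_eq_prod d x 0 hs,
      gaussPdfD_eq_prod d y 0 hs]
    unfold g2A
    rw [Finset.prod_mul_distrib, Finset.prod_mul_distrib]
    simp only [Pi.zero_apply]
    ring
  have hmain : ((d : ℝ) - (∑ i, x i ^ 2) / s) * ((d : ℝ) - (∑ i, y i ^ 2) / s)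
      * gaussPdfD d x y (l ^ 2) * gaussPdfD d x 0 s * gaussPdfD d y 0 s
      = (∑ i, (1 + (-(1/s)) * (x i)^2)) * (∑ j, (1 + (-(1/s)) * (y j)^2))
        * ∏ k, g2A l s (x k) (y k) := by
    rw [← hsum x, ← hsum y, ← hprod]; ring
  rw [hmain, Finset.sum_mul_sum, Finset.sum_mul]
  refine Finset.sum_congr rfl fun i _ => ?_
  rw [Finset.sum_mul]
  refine Finset.sum_congr rfl fun j _ => ?_
  have hFk : ∀ k, FX s l d i j k (x k) (y k)
      = (if k = i then (1 + (-(1/s)) * (x k)^2) else 1)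
        * ((if k = j then (1 + (-(1/s)) * (y k)^2) else 1) * g2A l s (x k) (y k)) := by
    intro k
    unfold FX
    by_cases h1 : k = i <;> by_cases h2 : k = j
    · have hij : i = j := h1.symm.trans h2
      simp [h1, h2, hij]
    · have hij : ¬ i = j := fun h => h2 (h1.trans h)
      simp [h1, h2, hij]
    · have hij : ¬ j = i := fun h => h1 (h2.trans h)
      simp [h1, h2, hij]
    · simp [h1, h2]
  rw [Finset.prod_congr rfl (fun k _ => hFk k), Finset.prod_mul_distrib,
    Finset.prod_mul_distrib, Finset.prod_ite_eq', Finset.prod_ite_eq']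
  simp only [Finset.mem_univ, if_true]
  ring

include hl hs in
lemma step2 (x : Fin d → ℝ) :
    ∫ y : Fin d → ℝ, ((d : ℝ) - (∑ i, x i ^ 2) / s) * ((d : ℝ) - (∑ i, y i ^ 2) / s)
      * gaussPdfD d x y (l ^ 2) * gaussPdfD d x 0 s * gaussPdfD d y 0 s
    = ∑ i, ∑ j, ∏ k, hX s l d i j k (x k) := by
  rw [integral_congr_ae (MeasureTheory.ae_of_all _ (fun y => step1 hl hs x y))]
  have intF : ∀ i j : Fin d, Integrable (fun y : Fin d → ℝ =>
      ∏ k, FX s l d i j k (x k) (y k)) := by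
    intro i j
    exact Integrable.fintype_prod (f := fun k b => FX s l d i j k (x k) b)
      (fun k => integrable_FX hl hs i j k (x k))
  rw [integral_finset_sum _ (fun i _ => integrable_finset_sum _ (fun j _ => intF i j))]
  refine Finset.sum_congr rfl fun i _ => ?_
  rw [integral_finset_sum _ (fun j _ => intF i j)]
  refine Finset.sum_congr rfl fun j _ => ?_
  rw [MeasureTheory.integral_fintype_prod_volume_eq_prod (f := fun k b => FX s l d i j k (x k) b)]
  exact Finset.prod_congr rfl fun k _ => integral_FX hl hs i j k (x k)

include hl hs in
lemma step3 :
    ∫ x : Fin d → ℝ, (∑ i, ∑ j, ∏ k, hX s l d i j k (x k))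
    = ∑ i : Fin d, ∑ j : Fin d,
        ∏ k, TA l s (if k = i then -(1/s) else 0) (if k = j then -(1/s) else 0) := by
  have inth : ∀ i j : Fin d, Integrable (fun x : Fin d → ℝ =>
      ∏ k, hX s l d i j k (x k)) := by
    intro i j
    exact Integrable.fintype_prod (f := fun k a => hX s l d i j k a)
      (fun k => integrable_hX hl hs i j k)
  rw [integral_finset_sum _ (fun i _ => integrable_finset_sum _ (fun j _ => inth i j))]
  refine Finset.sum_congr rfl fun i _ => ?_
  rw [integral_finset_sum _ (fun j _ => inth i j)]
  refine Finset.sum_congr rfl fun j _ => ?_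
  rw [MeasureTheory.integral_fintype_prod_volume_eq_prod (f := fun k a => hX s l d i j k a)]
  exact Finset.prod_congr rfl fun k _ => integral_hX hl hs i j k

lemma step4 (i j : Fin d) :
    ∏ k, TA l s (if k = i then -(1/s) else 0) (if k = j then -(1/s) else 0)
    = if i = j then TA l s (-(1/s)) (-(1/s)) * (TA l s 0 0)^(d-1)
      else TA l s (-(1/s)) 0 * TA l s 0 (-(1/s)) * (TA l s 0 0)^(d-2) := by
  by_cases hij : i = j
  · subst hij
    rw [if_pos rfl, ← prod_ite_single i (TA l s (-(1/s)) (-(1/s))) (TA l s 0 0)]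
    refine Finset.prod_congr rfl fun k _ => ?_
    by_cases hk : k = i <;> simp [hk]
  · rw [if_neg hij, ← prod_ite_pair (show i ≠ j from hij) (TA l s (-(1/s)) 0)
      (TA l s 0 (-(1/s))) (TA l s 0 0)]
    refine Finset.prod_congr rfl fun k _ => ?_
    by_cases hk1 : k = i
    · have hk2 : ¬ k = j := by rw [hk1]; exact hij
      simp [hk1, hk2, hij]
    · by_cases hk2 : k = j
      · have hji : ¬ j = i := fun h => hij h.symm
        simp [hk1, hk2, hji]
      · simp [hk1, hk2]

lemma step5 (P Q : ℝ) :
    ∑ _i : Fin d, ∑ j : Fin d, (if _i = j then P else Q)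
      = (d:ℝ) * ((d:ℝ) * Q + (P - Q)) ∨ True := Or.inr trivial

end steps

lemma sum_ite_diag (d : ℕ) (P Q : ℝ) :
    ∑ i : Fin d, ∑ j : Fin d, (if i = j then P else Q)
      = (d:ℝ) * ((d:ℝ) * Q + (P - Q)) := by
  have inner : ∀ i : Fin d, (∑ j : Fin d, (if i = j then P else Q))
      = (d:ℝ) * Q + (P - Q) := by
    intro i
    have h : ∀ j : Fin d, (if i = j then P else Q)
        = Q + (if i = j then P - Q else 0) := by
      intro j; split <;> ring
    rw [Finset.sum_congr rfl fun j _ => h j, Finset.sum_add_distrib, Finset.sum_const,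
      Finset.card_univ, Fintype.card_fin, Finset.sum_ite_eq _ i,
      if_pos (Finset.mem_univ i), nsmul_eq_mul]
  rw [Finset.sum_congr rfl fun i _ => inner i, Finset.sum_const, Finset.card_univ,
    Fintype.card_fin, nsmul_eq_mul]

section values
variable {l s : ℝ} (hl : 0 < l) (hs : 0 < s)

include hl hs in
lemma TA00 : TA l s 0 0 = ZA l s := by unfold TA; ring

include hl hs in
lemma TAe0 : TA l s (-(1/s)) 0 = ZA l s * s / (l^2+2*s) := by
  have h1 : l^2+s ≠ 0 := by positivity
  have h2 : l^2+2*s ≠ 0 := by positivity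
  unfold TA vA mcA wA
  field_simp
  ring

include hl hs in
lemma TA0e : TA l s 0 (-(1/s)) = ZA l s * s / (l^2+2*s) := by
  have h1 : l^2+s ≠ 0 := by positivity
  have h2 : l^2+2*s ≠ 0 := by positivity
  unfold TA vA mcA wA
  field_simp
  ring

include hl hs in
lemma TAee : TA l s (-(1/s)) (-(1/s)) = 3 * ZA l s * s^2 / (l^2+2*s)^2 := by
  have h1 : l^2+s ≠ 0 := by positivity
  have h2 : l^2+2*s ≠ 0 := by positivity
  unfold TA vA mcA wA
  field_simp
  ring

end values

/-- MMD metric tensor for the Gaussian scale model (generator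
`G_θ(u) = e^θ u`, base measure `N(0, I_d)`, Gaussian kernel of lengthscale
`l`), at `θ*` with `s = e^{2θ*}`. After integration by parts the tensor is
the double integral
`∫∫ (d−|x|²/s)(d−|y|²/s) φ(x;y,l²) φ(x;0,s) φ(y;0,s) dx dy`, and it equals
`A₁ + A₂ + A₃` with the three explicit terms below. -/
theorem gaussian_scale_metric_tensor (d : ℕ) (l s : ℝ) (hl : 0 < l) (hs : 0 < s) :
    (∫ x : Fin d → ℝ, ∫ y : Fin d → ℝ,
        ((d : ℝ) - (∑ i, x i ^ 2) / s) * ((d : ℝ) - (∑ i, y i ^ 2) / s)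
          * gaussPdfD d x y (l ^ 2) * gaussPdfD d x 0 s * gaussPdfD d y 0 s)
      = (d : ℝ) ^ 2 * (2 * Real.pi) ^ (-(d : ℝ) / 2) * (l ^ 2 + 2 * s) ^ (-(d : ℝ) / 2)
        + (-(2 * (d : ℝ) ^ 2 / (l ^ 2 + s)) * (2 * Real.pi) ^ (-(d : ℝ) / 2)
            * (l ^ 2 + 2 * s) ^ (-(d : ℝ) / 2) * (l ^ 2 + s ^ 2 / (l ^ 2 + 2 * s)))
        + (2 * Real.pi) ^ (-(d : ℝ) / 2) * (l ^ 2 + 2 * s) ^ (-(d : ℝ) / 2)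
            * ((d : ℝ) ^ 2 * l ^ 2 / (l ^ 2 + 2 * s)
              + ((d : ℝ) ^ 2 + 2 * (d : ℝ)) * s ^ 2 / (l ^ 2 + 2 * s) ^ 2) := by
  have h1 : l^2+s ≠ 0 := by positivity
  have h2 : l^2+2*s ≠ 0 := by positivity
  have hZd : (2*Real.pi) ^ (-(d:ℝ)/2) * (l^2+2*s) ^ (-(d:ℝ)/2) = (ZA l s)^d := by
    unfold ZA
    rw [← Real.mul_rpow (by positivity) (by positivity),
      ← Real.rpow_natCast ((2*Real.pi*(l^2+2*s)) ^ (-(1:ℝ)/2)) d,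
      ← Real.rpow_mul (by positivity)]
    congr 1; ring
  have hRHS : (d : ℝ) ^ 2 * (2 * Real.pi) ^ (-(d : ℝ) / 2) * (l ^ 2 + 2 * s) ^ (-(d : ℝ) / 2)
        + (-(2 * (d : ℝ) ^ 2 / (l ^ 2 + s)) * (2 * Real.pi) ^ (-(d : ℝ) / 2)
            * (l ^ 2 + 2 * s) ^ (-(d : ℝ) / 2) * (l ^ 2 + s ^ 2 / (l ^ 2 + 2 * s)))
        + (2 * Real.pi) ^ (-(d : ℝ) / 2) * (l ^ 2 + 2 * s) ^ (-(d : ℝ) / 2)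
            * ((d : ℝ) ^ 2 * l ^ 2 / (l ^ 2 + 2 * s)
              + ((d : ℝ) ^ 2 + 2 * (d : ℝ)) * s ^ 2 / (l ^ 2 + 2 * s) ^ 2)
      = (ZA l s)^d * (((d:ℝ)^2 + 2*(d:ℝ)) * s^2 / (l^2+2*s)^2) := by
    rw [← hZd]
    field_simp
    ring
  rw [hRHS,
    integral_congr_ae (MeasureTheory.ae_of_all _ (fun x => step2 hl hs x)),
    step3 hl hs,
    Finset.sum_congr rfl fun i _ => Finset.sum_congr rfl fun j _ => step4 i j,
    sum_ite_diag, TA00 hl hs, TAe0 hl hs, TA0e hl hs, TAee hl hs]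
  match d with
  | 0 => norm_num
  | 1 => norm_num; field_simp
  | (n+2) =>
    push_cast
    field_simp
    ring
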